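/- Let M ≥ 1, N ≥ 1 be integers and λ > 0, ρ > 0 real numbers, and let μ be the product measure on ℝ^M of M copies of the standard Gaussian measure on ℝ. Then for every t > 0, μ( { x ∈ ℝ^M : Σ_{j=1}^M |x_j| > N λ t² / (4ρ) } ) ≤ exp( M · ln 2 − N² λ² t⁴ / (32 M ρ²) ). Consequently, whenever the estimation error ζ of the penalized SDP satisfies ζ ≤ 2 √( ρ Σ_j |x_j| / (N λ) ), the event {ζ > t} has probability at most exp(−γ M) with γ = t⁴ λ² / (32 κ² ρ²) − ln 2, where κ = M/N. -/

import Mathlib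

open MeasureTheory ProbabilityTheory

section helpers

open Real

lemma gauss_integral_eq' (g : ℝ → ℝ) :
    ∫ y, g y ∂(gaussianReal 0 1) = ∫ y, gaussianPDFReal 0 1 y * g y := by
  rw [gaussianReal_of_var_ne_zero 0 one_ne_zero]
  have h : gaussianPDF 0 1 = fun x => ((gaussianPDFReal 0 1 x).toNNReal : ENNReal) := rfl
  rw [h, integral_withDensity_eq_integral_smul (measurable_gaussianPDFReal 0 1).real_toNNReal]
  congr 1; ext y
  rw [NNReal.smul_def, Real.coe_toNNReal _ (gaussianPDFReal_nonneg 0 1 y), smul_eq_mul]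

lemma gauss_integrable_iff' (g : ℝ → ℝ) :
    Integrable g (gaussianReal 0 1) ↔
      Integrable (fun y => gaussianPDFReal 0 1 y * g y) volume := by
  rw [gaussianReal_of_var_ne_zero 0 one_ne_zero]
  have h : gaussianPDF 0 1 = fun x => ((gaussianPDFReal 0 1 x).toNNReal : ENNReal) := rfl
  rw [h, integrable_withDensity_iff_integrable_smul (measurable_gaussianPDFReal 0 1).real_toNNReal]
  constructor <;> intro hh <;>
    · refine hh.congr (Filter.Eventually.of_forall fun y => ?_)
      simp only [NNReal.smul_def, smul_eq_mul]
      rw [Real.coe_toNNReal _ (gaussianPDFReal_nonneg 0 1 y)]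

lemma gauss_pdf_shift' (c y : ℝ) :
    gaussianPDFReal 0 1 y * Real.exp (c * y) = Real.exp (c^2/2) * gaussianPDFReal c 1 y := by
  simp only [gaussianPDFReal_def, NNReal.coe_one, mul_one]
  rw [mul_assoc, ← Real.exp_add, mul_comm (Real.exp (c^2/2)), mul_assoc, ← Real.exp_add]
  congr 1
  ring_nf

lemma gauss_exp_integrable' (c : ℝ) :
    Integrable (fun y => Real.exp (c * y)) (gaussianReal 0 1) := by
  rw [gauss_integrable_iff']
  simp_rw [gauss_pdf_shift' c]
  exact (integrable_gaussianPDFReal c 1).const_mul _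

lemma gauss_exp_integral' (c : ℝ) :
    ∫ y, Real.exp (c * y) ∂(gaussianReal 0 1) = Real.exp (c^2/2) := by
  rw [gauss_integral_eq']
  simp_rw [gauss_pdf_shift' c]
  rw [integral_const_mul, integral_gaussianPDFReal_eq_one c one_ne_zero, mul_one]

lemma gauss_exp_abs_integrable' (s : ℝ) :
    Integrable (fun y => Real.exp (s * |y|)) (gaussianReal 0 1) := by
  refine Integrable.mono' ((gauss_exp_integrable' s).add (gauss_exp_integrable' (-s)))
    ?_ (Filter.Eventually.of_forall fun y => ?_)
  · exact (Measurable.stronglyMeasurable (by measurability)).aestronglyMeasurable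
  · rw [Real.norm_eq_abs, abs_of_nonneg (Real.exp_nonneg _)]
    rcases abs_choice y with h | h <;> rw [h] <;> simp only [Pi.add_apply]
    · linarith [Real.exp_pos (-s * y)]
    · have hy : s * -y = -s * y := by ring
      rw [hy]; linarith [Real.exp_pos (s * y)]

lemma gauss_exp_abs_le' (s : ℝ) :
    ∫ y, Real.exp (s * |y|) ∂(gaussianReal 0 1) ≤ 2 * Real.exp (s^2/2) := by
  have h1 : ∫ y, Real.exp (s * |y|) ∂(gaussianReal 0 1) ≤
      ∫ y, (Real.exp (s * y) + Real.exp (-s * y)) ∂(gaussianReal 0 1) := by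
    refine integral_mono (gauss_exp_abs_integrable' s)
      ((gauss_exp_integrable' s).add (gauss_exp_integrable' (-s))) fun y => ?_
    rcases abs_choice y with h | h <;> rw [h]
    · linarith [Real.exp_pos (-s * y)]
    · have hy : s * -y = -s * y := by ring
      rw [hy]; linarith [Real.exp_pos (s * y)]
  rw [integral_add (gauss_exp_integrable' s) (gauss_exp_integrable' (-s)),
    gauss_exp_integral', gauss_exp_integral'] at h1
  rw [neg_sq] at h1
  linarith

lemma pi_integral_pow' (M : ℕ) (μ : Measure ℝ) [SigmaFinite μ] (f : ℝ → ℝ) :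
    ∫ x : Fin M → ℝ, ∏ j, f (x j) ∂(Measure.pi fun _ => μ) = (∫ y, f y ∂μ) ^ M := by
  letI : MeasureSpace ℝ := ⟨μ⟩
  haveI : SigmaFinite (volume : Measure ℝ) := ‹_›
  have := MeasureTheory.integral_fintype_prod_eq_pow (𝕜 := ℝ) (ι := Fin M) f (μ := μ)
  simpa [volume_pi] using this

lemma pi_integrable' (M : ℕ) (μ : Measure ℝ) [SigmaFinite μ] (f : ℝ → ℝ)
    (hf : Integrable f μ) :
    Integrable (fun x : Fin M → ℝ => ∏ j, f (x j)) (Measure.pi fun _ => μ) := by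
  letI : MeasureSpace ℝ := ⟨μ⟩
  haveI : SigmaFinite (volume : Measure ℝ) := ‹_›
  have := MeasureTheory.Integrable.fintype_prod (𝕜 := ℝ) (f := fun _ : Fin M => f) fun _ => hf
  simpa [volume_pi] using this


set_option maxHeartbeats 400000 in
lemma chernoff_abs_sum (M : ℕ) (hM : 1 ≤ M) (a : ℝ) (ha : 0 < a) :
    Measure.pi (fun _ : Fin M => gaussianReal 0 1)
        {x : Fin M → ℝ | a < ∑ j, |x j|} ≤
      ENNReal.ofReal (Real.exp (M * Real.log 2 - a ^ 2 / (2 * M))) := by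
  set μM := Measure.pi (fun _ : Fin M => gaussianReal 0 1) with hμM
  haveI : IsProbabilityMeasure μM := by
    rw [hμM]; infer_instance
  have hM0 : (0:ℝ) < M := by exact_mod_cast Nat.lt_of_lt_of_le Nat.zero_lt_one hM
  set s : ℝ := a / M with hs_def
  have hs : 0 < s := div_pos ha hM0
  have hexpand : (fun x : Fin M → ℝ => Real.exp (s * ∑ j, |x j|)) =
      fun x : Fin M → ℝ => ∏ j, Real.exp (s * |x j|) := by
    funext x
    rw [Finset.mul_sum, Real.exp_sum]
  have hX : Integrable (fun x : Fin M → ℝ => Real.exp (s * ∑ j, |x j|)) μM := by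
    rw [hexpand]
    exact pi_integrable' M _ _ (gauss_exp_abs_integrable' s)
  haveI hfin : IsFiniteMeasure μM := inferInstance
  clear_value μM
  have hch := @ProbabilityTheory.measure_ge_le_exp_mul_mgf (Fin M → ℝ) _
    (fun x => ∑ j, |x j|) μM s hfin a hs.le hX
  have hmgf : mgf (fun x : Fin M → ℝ => ∑ j, |x j|) μM s ≤ (2 * Real.exp (s^2/2)) ^ M := by
    have heq : mgf (fun x : Fin M → ℝ => ∑ j, |x j|) μM s
        = (∫ y, Real.exp (s * |y|) ∂(gaussianReal 0 1)) ^ M := by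
      rw [mgf]
      rw [show (fun x : Fin M → ℝ => Real.exp (s * ∑ j, |x j|)) =
        fun x : Fin M → ℝ => ∏ j, Real.exp (s * |x j|) from hexpand]
      rw [hμM]
      exact pi_integral_pow' M (gaussianReal 0 1) (fun y => Real.exp (s * |y|))
    rw [heq]
    exact pow_le_pow_left₀ (integral_nonneg fun y => (Real.exp_nonneg _))
      (gauss_exp_abs_le' s) M
  have hb : Real.exp (-s * a) * (2 * Real.exp (s^2/2)) ^ M
      = Real.exp (M * Real.log 2 - a ^ 2 / (2 * M)) := by
    rw [show (2:ℝ) * Real.exp (s^2/2) = Real.exp (Real.log 2 + s^2/2) by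
      rw [Real.exp_add, Real.exp_log two_pos]]
    rw [← Real.exp_nat_mul, ← Real.exp_add]
    congr 1
    rw [hs_def]
    field_simp
    ring
  have hfinal : (μM {x : Fin M → ℝ | a ≤ ∑ j, |x j|}).toReal ≤
      Real.exp (M * Real.log 2 - a ^ 2 / (2 * M)) := by
    calc _ ≤ Real.exp (-s * a) * mgf (fun x : Fin M → ℝ => ∑ j, |x j|) μM s := hch
    _ ≤ Real.exp (-s * a) * (2 * Real.exp (s^2/2)) ^ M :=
        mul_le_mul_of_nonneg_left hmgf (Real.exp_nonneg _)
    _ = _ := hb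
  calc μM {x : Fin M → ℝ | a < ∑ j, |x j|}
      ≤ μM {x : Fin M → ℝ | a ≤ ∑ j, |x j|} :=
        measure_mono fun x hx => le_of_lt (Set.mem_setOf_eq ▸ hx)
  _ ≤ ENNReal.ofReal (Real.exp (M * Real.log 2 - a ^ 2 / (2 * M))) := by
      rw [ENNReal.le_ofReal_iff_toReal_le (measure_ne_top _ _) (Real.exp_nonneg _)]
      exact hfinal

end helpers

theorem stmt_15 (M N : ℕ) (hM : 1 ≤ M) (hN : 1 ≤ N)
    (lam ρ : ℝ) (hlam : 0 < lam) (hρ : 0 < ρ) (t : ℝ) (ht : 0 < t) :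
    Measure.pi (fun _ : Fin M => gaussianReal 0 1)
        {x : Fin M → ℝ | N * lam * t ^ 2 / (4 * ρ) < ∑ j, |x j|} ≤
      ENNReal.ofReal
        (Real.exp (M * Real.log 2 - N ^ 2 * lam ^ 2 * t ^ 4 / (32 * M * ρ ^ 2))) ∧
    ∀ ζ : (Fin M → ℝ) → ℝ,
      (∀ x : Fin M → ℝ, ζ x ≤ 2 * Real.sqrt (ρ * (∑ j, |x j|) / (N * lam))) →
      Measure.pi (fun _ : Fin M => gaussianReal 0 1) {x : Fin M → ℝ | t < ζ x} ≤
        ENNReal.ofReal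
          (Real.exp (-(t ^ 4 * lam ^ 2 / (32 * ((M : ℝ) / N) ^ 2 * ρ ^ 2) -
            Real.log 2) * M)) := by
  have hM0 : (0:ℝ) < M := by exact_mod_cast Nat.lt_of_lt_of_le Nat.zero_lt_one hM
  have hN0 : (0:ℝ) < N := by exact_mod_cast Nat.lt_of_lt_of_le Nat.zero_lt_one hN
  set a : ℝ := N * lam * t ^ 2 / (4 * ρ) with ha_def
  have ha : 0 < a := by positivity
  have hkey : a ^ 2 / (2 * M) = N ^ 2 * lam ^ 2 * t ^ 4 / (32 * M * ρ ^ 2) := by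
    rw [ha_def]
    field_simp
    ring
  have h1 := chernoff_abs_sum M hM a ha
  rw [hkey] at h1
  refine ⟨h1, fun ζ hζ => ?_⟩
  have hsub : {x : Fin M → ℝ | t < ζ x} ⊆ {x : Fin M → ℝ | a < ∑ j, |x j|} := by
    intro x hx
    simp only [Set.mem_setOf_eq] at hx ⊢
    have hS : 0 ≤ ∑ j, |x j| := Finset.sum_nonneg fun j _ => abs_nonneg _
    have hu : 0 ≤ ρ * (∑ j, |x j|) / (N * lam) := by positivity
    have ht2 : t ^ 2 < 4 * (ρ * (∑ j, |x j|) / (N * lam)) := by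
      have := pow_lt_pow_left₀ (lt_of_lt_of_le hx (hζ x)) ht.le (n := 2) two_ne_zero
      calc t ^ 2 < (2 * Real.sqrt (ρ * (∑ j, |x j|) / (N * lam))) ^ 2 := by
            exact lt_of_lt_of_le this (le_refl _)
      _ = 4 * (ρ * (∑ j, |x j|) / (N * lam)) := by
            rw [mul_pow, Real.sq_sqrt hu]; norm_num
    rw [ha_def, div_lt_iff₀ (by positivity : (0:ℝ) < 4 * ρ)]
    have hNl : (0:ℝ) < (N:ℝ) * lam := by positivity
    have h6 := mul_lt_mul_of_pos_left ht2 hNl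
    have h7 : (N:ℝ) * lam * (4 * (ρ * (∑ j, |x j|) / (N * lam)))
        = (∑ j, |x j|) * (4 * ρ) := by
      field_simp
    rw [h7] at h6
    linarith
  have h2 := le_trans (measure_mono hsub) h1
  have hexp : (M:ℝ) * Real.log 2 - N ^ 2 * lam ^ 2 * t ^ 4 / (32 * M * ρ ^ 2)
      = -(t ^ 4 * lam ^ 2 / (32 * ((M : ℝ) / N) ^ 2 * ρ ^ 2) - Real.log 2) * M := by
    field_simp
    ring
  rw [hexp] at h2
  exact h2
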